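/- Let f: ℝ → ℝ be continuously differentiable with locally Hölder continuous derivative of exponent β ∈ (0,1], with f(0) = 0 and f'(0) = 0, and let F(u) = ∫₀^u f. Then for every n ∈ ℕ and ū > 0 there exists b₂ > 0 such that for all u₁,…,uₙ ∈ [-ū, ū], |F(∑ᵢ uᵢ) - ∑ᵢ F(uᵢ) - ∑_{i≠j} f(uᵢ)uⱼ| ≤ b₂ ( ∑_{i<j} |uᵢuⱼ|^{1+β/2} + ∑_{i<j<k} |uᵢuⱼ|^β |u_k| ). -/

import Mathlib

open Finset intervalIntegral


lemma Ioi_castSucc_eq (m : ℕ) (i : Fin m) :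
    (Finset.Ioi i.castSucc : Finset (Fin (m+1))) =
      insert (Fin.last m) ((Finset.Ioi i).map Fin.castSuccEmb) := by
  ext j
  cases j using Fin.lastCases with
  | last => simp [Fin.castSucc_lt_last]
  | cast k =>
    simp only [Finset.mem_Ioi, Finset.mem_insert, Finset.mem_map,
      Fin.castSucc_lt_castSucc_iff]
    constructor
    · intro h
      exact Or.inr ⟨k, h, rfl⟩
    · rintro (h | ⟨k', hk', hke⟩)
      · exact absurd h (Fin.castSucc_lt_last k).ne
      · have hkk : k' = k := Fin.castSucc_injective _ hke
        subst hkk; exact hk'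

lemma Ioi_last_eq (m : ℕ) : (Finset.Ioi (Fin.last m) : Finset (Fin (m+1))) = ∅ := by
  apply Finset.eq_empty_of_forall_notMem
  intro j hj
  exact absurd (Finset.mem_Ioi.1 hj) (not_lt.2 (Fin.le_last j))

lemma sum_Ioi_castSucc {m : ℕ} (i : Fin m) (h : Fin (m+1) → ℝ) :
    ∑ j ∈ Finset.Ioi i.castSucc, h j = (∑ j ∈ Finset.Ioi i, h j.castSucc) + h (Fin.last m) := by
  rw [Ioi_castSucc_eq, Finset.sum_insert, Finset.sum_map]
  · simp only [add_comm]
    rfl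
  · simp only [Finset.mem_map, not_exists]
    rintro k ⟨hk, hke⟩
    exact absurd hke (Fin.castSucc_lt_last k).ne

lemma pair_split (m : ℕ) (φ : Fin (m+1) → Fin (m+1) → ℝ) :
    ∑ i : Fin (m+1), ∑ j ∈ Finset.Ioi i, φ i j =
      (∑ i : Fin m, ∑ j ∈ Finset.Ioi i, φ i.castSucc j.castSucc) +
        ∑ i : Fin m, φ i.castSucc (Fin.last m) := by
  rw [Fin.sum_univ_castSucc, Ioi_last_eq]
  simp only [Finset.sum_empty, add_zero]
  rw [← Finset.sum_add_distrib]
  exact Finset.sum_congr rfl fun i _ => sum_Ioi_castSucc i _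

lemma triple_split (m : ℕ) (ψ : Fin (m+1) → Fin (m+1) → Fin (m+1) → ℝ) :
    ∑ i : Fin (m+1), ∑ j ∈ Finset.Ioi i, ∑ k ∈ Finset.Ioi j, ψ i j k =
      (∑ i : Fin m, ∑ j ∈ Finset.Ioi i, ∑ k ∈ Finset.Ioi j, ψ i.castSucc j.castSucc k.castSucc) +
        ∑ i : Fin m, ∑ j ∈ Finset.Ioi i, ψ i.castSucc j.castSucc (Fin.last m) := by
  rw [Fin.sum_univ_castSucc, Ioi_last_eq]
  simp only [Finset.sum_empty, add_zero]
  rw [← Finset.sum_add_distrib]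
  refine Finset.sum_congr rfl fun i _ => ?_
  rw [sum_Ioi_castSucc i (fun j => ∑ k ∈ Finset.Ioi j, ψ i.castSucc j k), Ioi_last_eq]
  simp only [Finset.sum_empty, add_zero]
  rw [← Finset.sum_add_distrib]
  exact Finset.sum_congr rfl fun j _ => sum_Ioi_castSucc j _


lemma rpow_two_add {β : ℝ} (hβ0 : 0 < β) (hβ1 : β ≤ 1) {x y : ℝ} (hx : 0 ≤ x) (hy : 0 ≤ y) :
    (x + y) ^ β ≤ x ^ β + y ^ β := by
  have h := NNReal.rpow_add_le_add_rpow x.toNNReal y.toNNReal hβ0.le hβ1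
  have h2 := NNReal.coe_le_coe.2 h
  rw [← Real.toNNReal_add hx hy] at h2
  simpa [NNReal.coe_rpow, Real.coe_toNNReal _ hx, Real.coe_toNNReal _ hy,
    Real.coe_toNNReal _ (add_nonneg hx hy)] using h2

lemma rpow_sum_le {β : ℝ} (hβ0 : 0 < β) (hβ1 : β ≤ 1) {ι : Type*} (s : Finset ι) (x : ι → ℝ)
    (hx : ∀ i ∈ s, 0 ≤ x i) : (∑ i ∈ s, x i) ^ β ≤ ∑ i ∈ s, (x i) ^ β := by
  induction s using Finset.cons_induction with
  | empty => simp [Real.zero_rpow hβ0.ne']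
  | cons a s ha ih =>
    rw [Finset.sum_cons, Finset.sum_cons]
    calc (x a + ∑ i ∈ s, x i) ^ β ≤ (x a) ^ β + (∑ i ∈ s, x i) ^ β :=
          rpow_two_add hβ0 hβ1 (hx a (Finset.mem_cons_self a s))
            (Finset.sum_nonneg fun i hi => hx i (Finset.mem_cons_of_mem hi))
      _ ≤ _ := by
          gcongr
          exact ih fun i hi => hx i (Finset.mem_cons_of_mem hi)

lemma pow_sum_le {p : ℝ} (hp : 1 ≤ p) {m : ℕ} (x : Fin m → ℝ) (hx : ∀ i, 0 ≤ x i) :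
    (∑ i, x i) ^ p ≤ (m : ℝ) ^ p * ∑ i, (x i) ^ p := by
  rcases Nat.eq_zero_or_pos m with rfl | hm
  · simp [Real.zero_rpow (by linarith : p ≠ 0)]
  · have : Nonempty (Fin m) := Fin.pos_iff_nonempty.1 hm
    obtain ⟨i₀, hi₀⟩ := Finset.exists_max_image Finset.univ x Finset.univ_nonempty
    have h1 : ∑ i, x i ≤ (m : ℝ) * x i₀ := by
      calc ∑ i, x i ≤ ∑ _i : Fin m, x i₀ := Finset.sum_le_sum fun i _ => hi₀.2 i (Finset.mem_univ i)
        _ = (m : ℝ) * x i₀ := by simp [mul_comm]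
    calc (∑ i, x i) ^ p ≤ ((m : ℝ) * x i₀) ^ p := by
          gcongr
          exact Finset.sum_nonneg fun i _ => hx i
      _ = (m : ℝ) ^ p * (x i₀) ^ p := Real.mul_rpow (by positivity) (hx i₀)
      _ ≤ (m : ℝ) ^ p * ∑ i, (x i) ^ p :=
          mul_le_mul_of_nonneg_left
            (Finset.single_le_sum (fun i _ => Real.rpow_nonneg (hx i) p) (Finset.mem_univ i₀))
            (Real.rpow_nonneg (Nat.cast_nonneg m) p)


lemma abs_le_of_uIoc {t b : ℝ} (h : t ∈ Set.uIoc 0 b) : |t| ≤ |b| := by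
  rcases Set.mem_uIoc.1 h with ⟨h1, h2⟩ | ⟨h1, h2⟩
  · rw [abs_of_pos h1]; exact h2.trans (le_abs_self b)
  · rw [abs_of_nonpos h2]
    have := neg_abs_le b
    linarith [abs_nonneg b, neg_le_neg h1.le, (neg_abs_le b)]

lemma deriv_cont (f : ℝ → ℝ) (β : ℝ) (hβ0 : 0 < β)
    (hholder : ∀ K : Set ℝ, IsCompact K → ∃ C > 0, ∀ s ∈ K, ∀ t ∈ K,
      |deriv f s - deriv f t| ≤ C * |s - t| ^ β) : Continuous (deriv f) := by
  rw [continuous_iff_continuousAt]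
  intro x
  obtain ⟨C, hC, hH⟩ := hholder (Set.Icc (x-1) (x+1)) isCompact_Icc
  have hb : ∀ᶠ y in nhds x, ‖deriv f y - deriv f x‖ ≤ C * |y - x| ^ β := by
    filter_upwards [Icc_mem_nhds (by linarith : x - 1 < x) (by linarith : x < x + 1)] with y hy
    exact hH y hy x (Set.mem_Icc.2 ⟨by linarith, by linarith⟩)
  have ht : Filter.Tendsto (fun y => C * |y - x| ^ β) (nhds x) (nhds 0) := by
    have hcont : Continuous (fun y => C * |y - x| ^ β) := by
      apply Continuous.mul continuous_const
      exact (continuous_abs.comp (continuous_id.sub continuous_const)).rpow_const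
        (fun y => Or.inr hβ0.le)
    have := hcont.tendsto x
    simpa [Real.zero_rpow hβ0.ne'] using this
  have h0 : Filter.Tendsto (fun y => deriv f y - deriv f x) (nhds x) (nhds 0) :=
    squeeze_zero_norm' hb ht
  have : Filter.Tendsto (fun y => deriv f y - deriv f x + deriv f x) (nhds x)
      (nhds (0 + deriv f x)) := h0.add_const _
  simpa [ContinuousAt] using this

lemma ftc_f (f : ℝ → ℝ) (hdiff : Differentiable ℝ f) (hc : Continuous (deriv f)) (a b : ℝ) :
    ∫ x in a..b, deriv f x = f b - f a :=
  integral_deriv_eq_sub (fun x _ => hdiff x) (hc.intervalIntegrable a b)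

lemma L3 (f : ℝ → ℝ) (β C R : ℝ) (hC0 : 0 ≤ C)
    (hdiff : Differentiable ℝ f) (hc : Continuous (deriv f)) (hf0 : f 0 = 0)
    (hR : ∀ s t : ℝ, |s| ≤ R → |t| ≤ R → |deriv f s - deriv f t| ≤ C * |s - t| ^ β)
    (a b : ℝ) (hab : |a| + |b| ≤ R) :
    |f (a + b) - f a - f b| ≤ C * |a| ^ β * |b| := by
  have haR : |a| ≤ R := by linarith [abs_nonneg b]
  have hbR : |b| ≤ R := by linarith [abs_nonneg a]
  have int1 : IntervalIntegrable (fun t => deriv f (a + t)) MeasureTheory.volume 0 b :=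
    (hc.comp (continuous_const.add continuous_id)).intervalIntegrable 0 b
  have int2 : IntervalIntegrable (fun t => deriv f t) MeasureTheory.volume 0 b :=
    hc.intervalIntegrable 0 b
  have e1 : ∫ t in (0:ℝ)..b, deriv f (a + t) = f (a + b) - f a := by
    rw [intervalIntegral.integral_comp_add_left (fun t => deriv f t) a, add_zero,
      ftc_f f hdiff hc]
  have e2 : ∫ t in (0:ℝ)..b, deriv f t = f b := by
    rw [ftc_f f hdiff hc, hf0, sub_zero]
  have e3 : ∫ t in (0:ℝ)..b, (deriv f (a + t) - deriv f t) = f (a + b) - f a - f b := by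
    rw [intervalIntegral.integral_sub int1 int2, e1, e2]
  have hbound : ∀ t ∈ Set.uIoc (0:ℝ) b, ‖deriv f (a + t) - deriv f t‖ ≤ C * |a| ^ β := by
    intro t ht
    have htb := abs_le_of_uIoc ht
    have h1 : |a + t| ≤ R := by
      calc |a + t| ≤ |a| + |t| := abs_add_le a t
        _ ≤ R := by linarith
    have h2 : |t| ≤ R := htb.trans hbR
    have := hR (a + t) t h1 h2
    simpa [Real.norm_eq_abs, add_sub_cancel_right] using this
  calc |f (a + b) - f a - f b| = ‖∫ t in (0:ℝ)..b, (deriv f (a + t) - deriv f t)‖ := by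
        rw [e3, Real.norm_eq_abs]
    _ ≤ C * |a| ^ β * |b - 0| := intervalIntegral.norm_integral_le_of_norm_le_const hbound
    _ = C * |a| ^ β * |b| := by rw [sub_zero]

lemma L4 (f : ℝ → ℝ) (β C R : ℝ) (hβ0 : 0 < β) (hC0 : 0 ≤ C)
    (hdiff : Differentiable ℝ f) (hc : Continuous (deriv f)) (hf0 : f 0 = 0)
    (hf'0 : deriv f 0 = 0)
    (hR : ∀ s t : ℝ, |s| ≤ R → |t| ≤ R → |deriv f s - deriv f t| ≤ C * |s - t| ^ β)
    (a t : ℝ) (hat : |a| + |t| ≤ R) :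
    |f (a + t) - f a - f t - a * deriv f t| ≤ 2 * C * |a| ^ (1 + β/2) * |t| ^ (β/2) := by
  have haR : |a| ≤ R := by linarith [abs_nonneg t]
  have htR : |t| ≤ R := by linarith [abs_nonneg a]
  have int1 : IntervalIntegrable (fun s => deriv f (t + s)) MeasureTheory.volume 0 a :=
    (hc.comp (continuous_const.add continuous_id)).intervalIntegrable 0 a
  have int2 : IntervalIntegrable (fun s => deriv f s) MeasureTheory.volume 0 a :=
    hc.intervalIntegrable 0 a
  have int3 : IntervalIntegrable (fun _ : ℝ => deriv f t) MeasureTheory.volume 0 a :=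
    intervalIntegrable_const
  have e1 : ∫ s in (0:ℝ)..a, deriv f (t + s) = f (a + t) - f t := by
    rw [intervalIntegral.integral_comp_add_left (fun s => deriv f s) t, add_zero,
      ftc_f f hdiff hc, add_comm]
  have e2 : ∫ s in (0:ℝ)..a, deriv f s = f a := by
    rw [ftc_f f hdiff hc, hf0, sub_zero]
  have e3 : ∫ _s in (0:ℝ)..a, deriv f t = a * deriv f t := by
    rw [intervalIntegral.integral_const, sub_zero, smul_eq_mul]
  have e4 : ∫ s in (0:ℝ)..a, (deriv f (t + s) - deriv f s - deriv f t)
      = f (a + t) - f a - f t - a * deriv f t := by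
    rw [intervalIntegral.integral_sub (int1.sub int2) int3,
      intervalIntegral.integral_sub int1 int2, e1, e2, e3]
    ring
  have hbound : ∀ s ∈ Set.uIoc (0:ℝ) a,
      ‖deriv f (t + s) - deriv f s - deriv f t‖ ≤ 2 * C * |a| ^ (β/2) * |t| ^ (β/2) := by
    intro s hs
    have hsa := abs_le_of_uIoc hs
    have hsR : |s| ≤ R := hsa.trans haR
    have htsR : |t + s| ≤ R := by
      calc |t + s| ≤ |t| + |s| := abs_add_le t s
        _ ≤ R := by linarith
    have key : |deriv f (t + s) - deriv f s - deriv f t| ≤ 2 * C * (|s| ^ (β/2) * |t| ^ (β/2)) := by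
      rcases le_total |s| |t| with hst | hst
      · have h1 : |deriv f (t + s) - deriv f t| ≤ C * |s| ^ β := by
          have := hR (t + s) t htsR htR
          simpa [add_sub_cancel_left] using this
        have h2 : |deriv f s| ≤ C * |s| ^ β := by
          have := hR s 0 hsR (by simpa using (abs_nonneg a).trans haR)
          simpa [hf'0] using this
        have h3 : |s| ^ β = |s| ^ (β/2) * |s| ^ (β/2) := by
          rw [← Real.rpow_add' (abs_nonneg s) (by linarith)]
          ring_nf
        have h4 : |s| ^ (β/2) * |s| ^ (β/2) ≤ |s| ^ (β/2) * |t| ^ (β/2) := by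
          apply mul_le_mul_of_nonneg_left _ (Real.rpow_nonneg (abs_nonneg s) _)
          exact Real.rpow_le_rpow (abs_nonneg s) hst (by linarith)
        calc |deriv f (t + s) - deriv f s - deriv f t|
            ≤ |deriv f (t + s) - deriv f t| + |deriv f s| := by
              have he : deriv f (t + s) - deriv f s - deriv f t
                  = (deriv f (t + s) - deriv f t) - deriv f s := by ring
              rw [he]
              exact abs_sub _ _
          _ ≤ C * |s| ^ β + C * |s| ^ β := add_le_add h1 h2
          _ = 2 * C * (|s| ^ (β/2) * |s| ^ (β/2)) := by rw [← h3]; ring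
          _ ≤ 2 * C * (|s| ^ (β/2) * |t| ^ (β/2)) := by
              apply mul_le_mul_of_nonneg_left h4 (by linarith)
      · have h1 : |deriv f (t + s) - deriv f s| ≤ C * |t| ^ β := by
          have := hR (t + s) s htsR hsR
          simpa [add_sub_cancel_right] using this
        have h2 : |deriv f t| ≤ C * |t| ^ β := by
          have := hR t 0 htR (by simpa using (abs_nonneg a).trans haR)
          simpa [hf'0] using this
        have h3 : |t| ^ β = |t| ^ (β/2) * |t| ^ (β/2) := by
          rw [← Real.rpow_add' (abs_nonneg t) (by linarith)]
          ring_nf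
        have h4 : |t| ^ (β/2) * |t| ^ (β/2) ≤ |s| ^ (β/2) * |t| ^ (β/2) := by
          apply mul_le_mul_of_nonneg_right _ (Real.rpow_nonneg (abs_nonneg t) _)
          exact Real.rpow_le_rpow (abs_nonneg t) hst (by linarith)
        calc |deriv f (t + s) - deriv f s - deriv f t|
            ≤ |deriv f (t + s) - deriv f s| + |deriv f t| := abs_sub _ _
          _ ≤ C * |t| ^ β + C * |t| ^ β := add_le_add h1 h2
          _ = 2 * C * (|t| ^ (β/2) * |t| ^ (β/2)) := by rw [← h3]; ring
          _ ≤ 2 * C * (|s| ^ (β/2) * |t| ^ (β/2)) := by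
              apply mul_le_mul_of_nonneg_left h4 (by linarith)
    have hmono : |s| ^ (β/2) ≤ |a| ^ (β/2) :=
      Real.rpow_le_rpow (abs_nonneg s) hsa (by linarith)
    calc ‖deriv f (t + s) - deriv f s - deriv f t‖
        ≤ 2 * C * (|s| ^ (β/2) * |t| ^ (β/2)) := by rw [Real.norm_eq_abs]; exact key
      _ ≤ 2 * C * (|a| ^ (β/2) * |t| ^ (β/2)) := by
          apply mul_le_mul_of_nonneg_left _ (by linarith)
          exact mul_le_mul_of_nonneg_right hmono (Real.rpow_nonneg (abs_nonneg t) _)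
      _ = 2 * C * |a| ^ (β/2) * |t| ^ (β/2) := by ring
  calc |f (a + t) - f a - f t - a * deriv f t|
      = ‖∫ s in (0:ℝ)..a, (deriv f (t + s) - deriv f s - deriv f t)‖ := by
        rw [e4, Real.norm_eq_abs]
    _ ≤ 2 * C * |a| ^ (β/2) * |t| ^ (β/2) * |a - 0| :=
        intervalIntegral.norm_integral_le_of_norm_le_const hbound
    _ = 2 * C * (|a| ^ (β/2) * |a|) * |t| ^ (β/2) := by rw [sub_zero]; ring
    _ = 2 * C * |a| ^ (1 + β/2) * |t| ^ (β/2) := by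
        rw [Real.rpow_add' (abs_nonneg a) (by linarith), Real.rpow_one]
        ring

lemma L5 (f F : ℝ → ℝ) (β C R : ℝ) (hβ0 : 0 < β) (hC0 : 0 ≤ C)
    (hdiff : Differentiable ℝ f) (hc : Continuous (deriv f)) (hf0 : f 0 = 0)
    (hf'0 : deriv f 0 = 0)
    (hR : ∀ s t : ℝ, |s| ≤ R → |t| ≤ R → |deriv f s - deriv f t| ≤ C * |s - t| ^ β)
    (hF : ∀ u : ℝ, F u = ∫ t in (0:ℝ)..u, f t)
    (a b : ℝ) (hab : |a| + |b| ≤ R) :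
    |F (a + b) - F a - F b - f a * b - f b * a| ≤
      2 * C * |a| ^ (1 + β/2) * |b| ^ (1 + β/2) := by
  have hfc : Continuous f := hdiff.continuous
  have int1 : IntervalIntegrable (fun t => f (a + t)) MeasureTheory.volume 0 b :=
    (hfc.comp (continuous_const.add continuous_id)).intervalIntegrable 0 b
  have int2 : IntervalIntegrable f MeasureTheory.volume 0 b := hfc.intervalIntegrable 0 b
  have int3 : IntervalIntegrable (fun _ : ℝ => f a) MeasureTheory.volume 0 b :=
    intervalIntegrable_const
  have int4 : IntervalIntegrable (fun t => a * deriv f t) MeasureTheory.volume 0 b :=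
    (continuous_const.mul hc).intervalIntegrable 0 b
  have e1 : ∫ t in (0:ℝ)..b, f (a + t) = F (a + b) - F a := by
    rw [intervalIntegral.integral_comp_add_left f a, add_zero]
    have h2 : (∫ x in (0:ℝ)..a, f x) + ∫ x in a..(a+b), f x = ∫ x in (0:ℝ)..(a+b), f x :=
      intervalIntegral.integral_add_adjacent_intervals (hfc.intervalIntegrable 0 a)
        (hfc.intervalIntegrable a (a+b))
    rw [hF (a+b), hF a]
    linarith
  have e2 : ∫ t in (0:ℝ)..b, f t = F b := (hF b).symm
  have e3 : ∫ _t in (0:ℝ)..b, f a = f a * b := by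
    rw [intervalIntegral.integral_const, sub_zero, smul_eq_mul, mul_comm]
  have e4 : ∫ t in (0:ℝ)..b, a * deriv f t = f b * a := by
    rw [intervalIntegral.integral_const_mul, ftc_f f hdiff hc, hf0, sub_zero, mul_comm]
  have e5 : ∫ t in (0:ℝ)..b, (f (a + t) - f a - f t - a * deriv f t)
      = F (a + b) - F a - F b - f a * b - f b * a := by
    rw [intervalIntegral.integral_sub ((int1.sub int3).sub int2) int4,
      intervalIntegral.integral_sub (int1.sub int3) int2,
      intervalIntegral.integral_sub int1 int3, e1, e2, e3, e4]
    ring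
  have hbound : ∀ t ∈ Set.uIoc (0:ℝ) b, ‖f (a + t) - f a - f t - a * deriv f t‖ ≤
      2 * C * |a| ^ (1 + β/2) * |b| ^ (β/2) := by
    intro t ht
    have htb := abs_le_of_uIoc ht
    have h1 : |a| + |t| ≤ R := by linarith
    have h2 := L4 f β C R hβ0 hC0 hdiff hc hf0 hf'0 hR a t h1
    rw [Real.norm_eq_abs]
    calc |f (a + t) - f a - f t - a * deriv f t| ≤ 2 * C * |a| ^ (1 + β/2) * |t| ^ (β/2) := h2
      _ ≤ 2 * C * |a| ^ (1 + β/2) * |b| ^ (β/2) := by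
          apply mul_le_mul_of_nonneg_left _ (by positivity)
          exact Real.rpow_le_rpow (abs_nonneg t) htb (by linarith)
  calc |F (a + b) - F a - F b - f a * b - f b * a|
      = ‖∫ t in (0:ℝ)..b, (f (a + t) - f a - f t - a * deriv f t)‖ := by
        rw [e5, Real.norm_eq_abs]
    _ ≤ 2 * C * |a| ^ (1 + β/2) * |b| ^ (β/2) * |b - 0| :=
        intervalIntegral.norm_integral_le_of_norm_le_const hbound
    _ = 2 * C * |a| ^ (1 + β/2) * (|b| ^ (β/2) * |b|) := by rw [sub_zero]; ring
    _ = 2 * C * |a| ^ (1 + β/2) * |b| ^ (1 + β/2) := by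
        rw [Real.rpow_add' (abs_nonneg b) (by linarith), Real.rpow_one]
        ring

lemma subadd (f : ℝ → ℝ) (β C R ub : ℝ) (n : ℕ) (hβ0 : 0 < β) (hβ1 : β ≤ 1) (hC0 : 0 ≤ C)
    (hdiff : Differentiable ℝ f) (hc : Continuous (deriv f)) (hf0 : f 0 = 0)
    (hR : ∀ s t : ℝ, |s| ≤ R → |t| ≤ R → |deriv f s - deriv f t| ≤ C * |s - t| ^ β)
    (hub : 0 < ub) (hnR : (n:ℝ) * ub + ub ≤ R) :
    ∀ m (v : Fin m → ℝ), (∀ i, |v i| ≤ ub) → (∑ i, |v i|) ≤ (n:ℝ) * ub →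
      |f (∑ i, v i) - ∑ i, f (v i)| ≤ C * ∑ i, ∑ j ∈ Finset.Ioi i, |v i| ^ β * |v j| := by
  intro m
  induction m with
  | zero => intro v _ _; simp [hf0]
  | succ m ih =>
    intro v hvub hvsum
    have hT : ∑ i, v i = (∑ i : Fin m, v i.castSucc) + v (Fin.last m) := Fin.sum_univ_castSucc v
    set a := v (Fin.last m) with ha
    set S := ∑ i : Fin m, v i.castSucc with hS
    have habs : ∑ i, |v i| = (∑ i : Fin m, |v i.castSucc|) + |a| :=
      Fin.sum_univ_castSucc (fun i => |v i|)
    have hwsum : (∑ i : Fin m, |v i.castSucc|) ≤ (n:ℝ) * ub := by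
      have := abs_nonneg a; linarith [habs ▸ hvsum]
    have hSabs : |S| ≤ ∑ i : Fin m, |v i.castSucc| := Finset.abs_sum_le_sum_abs _ _
    have hSn : |S| ≤ (n:ℝ) * ub := hSabs.trans hwsum
    have haub : |a| ≤ ub := hvub _
    have hL3 : |f (S + a) - f S - f a| ≤ C * |S| ^ β * |a| :=
      L3 f β C R hC0 hdiff hc hf0 hR S a (by linarith)
    have hfsum : ∑ i, f (v i) = (∑ i : Fin m, f (v i.castSucc)) + f a :=
      Fin.sum_univ_castSucc (fun i => f (v i))
    have hih := ih (fun i => v i.castSucc) (fun i => hvub _) hwsum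
    have hsplit := pair_split m (fun i j => |v i| ^ β * |v j|)
    have hpow : |S| ^ β ≤ ∑ i : Fin m, |v i.castSucc| ^ β := by
      calc |S| ^ β ≤ (∑ i : Fin m, |v i.castSucc|) ^ β :=
            Real.rpow_le_rpow (abs_nonneg S) hSabs hβ0.le
        _ ≤ _ := rpow_sum_le hβ0 hβ1 _ _ (fun i _ => abs_nonneg _)
    have key1 : C * |S| ^ β * |a| ≤ C * ∑ i : Fin m, |v i.castSucc| ^ β * |a| := by
      rw [← Finset.sum_mul]
      calc C * |S| ^ β * |a| ≤ C * (∑ i : Fin m, |v i.castSucc| ^ β) * |a| := by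
            apply mul_le_mul_of_nonneg_right _ (abs_nonneg a)
            exact mul_le_mul_of_nonneg_left hpow hC0
        _ = C * ((∑ i : Fin m, |v i.castSucc| ^ β) * |a|) := by ring
    calc |f (∑ i, v i) - ∑ i, f (v i)|
        = |(f (S + a) - f S - f a) + (f S - ∑ i : Fin m, f (v i.castSucc))| := by
          rw [hT, hfsum]; ring_nf
      _ ≤ |f (S + a) - f S - f a| + |f S - ∑ i : Fin m, f (v i.castSucc)| := abs_add_le _ _
      _ ≤ C * (∑ i : Fin m, |v i.castSucc| ^ β * |a|)
            + C * ∑ i : Fin m, ∑ j ∈ Finset.Ioi i, |v i.castSucc| ^ β * |v j.castSucc| := by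
          apply add_le_add _ hih
          calc |f (S + a) - f S - f a| ≤ C * |S| ^ β * |a| := hL3
            _ ≤ _ := key1
      _ = C * ∑ i, ∑ j ∈ Finset.Ioi i, |v i| ^ β * |v j| := by
          rw [hsplit]; ring

lemma combine_ineq (K1 K2 pm tm pN tN : ℝ) (hK10 : 0 ≤ K1) (hK20 : 0 ≤ K2)
    (hpN : 0 ≤ pN) (htN : 0 ≤ tN) :
    K1 * pN + K2 * tN + (K1 + K2) * (pm + tm) ≤ (K1 + K2) * ((pm + pN) + (tm + tN)) := by
  nlinarith [mul_nonneg hK20 hpN, mul_nonneg hK10 htN]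

lemma mainind (f F : ℝ → ℝ) (β C R ub : ℝ) (n : ℕ) (hβ0 : 0 < β) (hβ1 : β ≤ 1) (hC0 : 0 ≤ C)
    (hdiff : Differentiable ℝ f) (hc : Continuous (deriv f)) (hf0 : f 0 = 0)
    (hf'0 : deriv f 0 = 0)
    (hR : ∀ s t : ℝ, |s| ≤ R → |t| ≤ R → |deriv f s - deriv f t| ≤ C * |s - t| ^ β)
    (hF : ∀ u : ℝ, F u = ∫ t in (0:ℝ)..u, f t)
    (hub : 0 < ub) (hnR : (n:ℝ) * ub + ub ≤ R) :
    ∀ m, m ≤ n → ∀ v : Fin m → ℝ, (∀ i, |v i| ≤ ub) → (∑ i, |v i|) ≤ (n:ℝ) * ub →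
      |F (∑ i, v i) - ∑ i, F (v i) - ∑ i, f (v i) * ((∑ j, v j) - v i)| ≤
        (2 * C * ((n:ℝ)+1) ^ (1 + β/2) + C * ub ^ (1-β)) *
          ((∑ i, ∑ j ∈ Finset.Ioi i, |v i * v j| ^ (1 + β/2)) +
            ∑ i, ∑ j ∈ Finset.Ioi i, ∑ k ∈ Finset.Ioi j, |v i * v j| ^ β * |v k|) := by
  have hp1 : (1:ℝ) ≤ 1 + β/2 := by linarith
  have hp0 : (0:ℝ) ≤ 1 + β/2 := by linarith
  set K1 := 2 * C * ((n:ℝ)+1) ^ (1 + β/2) with hK1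
  set K2 := C * ub ^ (1-β) with hK2
  have hK10 : 0 ≤ K1 := by
    apply mul_nonneg (by linarith)
    exact Real.rpow_nonneg (by positivity) _
  have hK20 : 0 ≤ K2 := mul_nonneg hC0 (Real.rpow_nonneg hub.le _)
  intro m
  induction m with
  | zero =>
    intro _ v _ _
    have hF0 : F 0 = 0 := by rw [hF 0, intervalIntegral.integral_same]
    simp [hF0]
  | succ m ih =>
    intro hmn v hvub hvsum
    have hm : m ≤ n := Nat.le_of_succ_le hmn
    have hT : ∑ i, v i = (∑ i : Fin m, v i.castSucc) + v (Fin.last m) := Fin.sum_univ_castSucc v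
    set a := v (Fin.last m) with ha
    set S := ∑ i : Fin m, v i.castSucc with hSdef
    have habs : ∑ i, |v i| = (∑ i : Fin m, |v i.castSucc|) + |a| :=
      Fin.sum_univ_castSucc (fun i => |v i|)
    have hwsum : (∑ i : Fin m, |v i.castSucc|) ≤ (n:ℝ) * ub := by
      have := abs_nonneg a; linarith [habs ▸ hvsum]
    have hSabs : |S| ≤ ∑ i : Fin m, |v i.castSucc| := Finset.abs_sum_le_sum_abs _ _
    have hSn : |S| ≤ (n:ℝ) * ub := hSabs.trans hwsum
    have haub : |a| ≤ ub := hvub _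
    -- decomposition of the cross term
    have hcross : ∑ i, f (v i) * ((∑ j, v j) - v i) =
        (∑ i : Fin m, f (v i.castSucc) * (S - v i.castSucc)) +
          (∑ i : Fin m, f (v i.castSucc)) * a + f a * S := by
      rw [Fin.sum_univ_castSucc (fun i => f (v i) * ((∑ j, v j) - v i)), hT]
      have hterm : ∀ i : Fin m, f (v i.castSucc) * (S + a - v i.castSucc) =
          f (v i.castSucc) * (S - v i.castSucc) + f (v i.castSucc) * a := fun i => by ring
      rw [Finset.sum_congr rfl (fun i _ => hterm i), Finset.sum_add_distrib, ← Finset.sum_mul]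
      ring
    have hFsum : ∑ i, F (v i) = (∑ i : Fin m, F (v i.castSucc)) + F a :=
      Fin.sum_univ_castSucc (fun i => F (v i))
    -- the three pieces
    have hdecomp : F (∑ i, v i) - ∑ i, F (v i) - ∑ i, f (v i) * ((∑ j, v j) - v i) =
        (F (S + a) - F S - F a - f S * a - f a * S) +
          (f S - ∑ i : Fin m, f (v i.castSucc)) * a +
          (F S - (∑ i : Fin m, F (v i.castSucc)) -
            ∑ i : Fin m, f (v i.castSucc) * (S - v i.castSucc)) := by
      rw [hcross, hFsum, hT]; ring
    -- bound piece 1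
    have hE : |F (S + a) - F S - F a - f S * a - f a * S| ≤
        2 * C * |S| ^ (1 + β/2) * |a| ^ (1 + β/2) :=
      L5 f F β C R hβ0 hC0 hdiff hc hf0 hf'0 hR hF S a (by linarith)
    have hSpow : |S| ^ (1 + β/2) ≤ ((n:ℝ)+1) ^ (1 + β/2) * ∑ i : Fin m, |v i.castSucc| ^ (1 + β/2) := by
      calc |S| ^ (1 + β/2) ≤ (∑ i : Fin m, |v i.castSucc|) ^ (1 + β/2) :=
            Real.rpow_le_rpow (abs_nonneg S) hSabs hp0
        _ ≤ (m:ℝ) ^ (1 + β/2) * ∑ i : Fin m, |v i.castSucc| ^ (1 + β/2) :=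
            pow_sum_le hp1 _ (fun i => abs_nonneg _)
        _ ≤ ((n:ℝ)+1) ^ (1 + β/2) * ∑ i : Fin m, |v i.castSucc| ^ (1 + β/2) := by
            apply mul_le_mul_of_nonneg_right
            · apply Real.rpow_le_rpow (Nat.cast_nonneg m) _ hp0
              have : (m:ℝ) ≤ (n:ℝ) := Nat.cast_le.2 hm
              linarith
            · exact Finset.sum_nonneg fun i _ => Real.rpow_nonneg (abs_nonneg _) _
    have hpairNew : ∀ i : Fin m, |v i.castSucc| ^ (1 + β/2) * |a| ^ (1 + β/2) =
        |v i.castSucc * a| ^ (1 + β/2) := by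
      intro i
      rw [abs_mul, Real.mul_rpow (abs_nonneg _) (abs_nonneg _)]
    have hE2 : |F (S + a) - F S - F a - f S * a - f a * S| ≤
        K1 * ∑ i : Fin m, |v i.castSucc * a| ^ (1 + β/2) := by
      calc |F (S + a) - F S - F a - f S * a - f a * S|
          ≤ 2 * C * |S| ^ (1 + β/2) * |a| ^ (1 + β/2) := hE
        _ ≤ 2 * C * (((n:ℝ)+1) ^ (1 + β/2) * ∑ i : Fin m, |v i.castSucc| ^ (1 + β/2))
              * |a| ^ (1 + β/2) := by
            apply mul_le_mul_of_nonneg_right _ (Real.rpow_nonneg (abs_nonneg a) _)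
            exact mul_le_mul_of_nonneg_left hSpow (by linarith)
        _ = K1 * ∑ i : Fin m, (|v i.castSucc| ^ (1 + β/2) * |a| ^ (1 + β/2)) := by
            rw [hK1, ← Finset.sum_mul]; ring
        _ = K1 * ∑ i : Fin m, |v i.castSucc * a| ^ (1 + β/2) := by
            congr 1
            exact Finset.sum_congr rfl fun i _ => hpairNew i
    -- bound piece 2
    have hG : |f S - ∑ i : Fin m, f (v i.castSucc)| ≤
        C * ∑ i : Fin m, ∑ j ∈ Finset.Ioi i, |v i.castSucc| ^ β * |v j.castSucc| := by
      have h := subadd f β C R ub n hβ0 hβ1 hC0 hdiff hc hf0 hR hub hnR m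
        (fun i => v i.castSucc) (fun i => hvub _) hwsum
      rw [hSdef]
      exact h
    have haux : ∀ x : ℝ, 0 ≤ x → x ≤ ub → x ≤ ub ^ (1-β) * x ^ β := by
      intro x hx hxub
      have e : β + (1 - β) = 1 := by ring
      have this1 : x = x ^ β * x ^ (1-β) := by
        calc x = x ^ (β + (1-β)) := by rw [e, Real.rpow_one]
          _ = x ^ β * x ^ (1-β) := Real.rpow_add' hx (by rw [e]; norm_num)
      have h2 : x ^ (1-β) ≤ ub ^ (1-β) := Real.rpow_le_rpow hx hxub (by linarith)
      calc x = x ^ β * x ^ (1-β) := this1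
        _ ≤ x ^ β * ub ^ (1-β) := mul_le_mul_of_nonneg_left h2 (Real.rpow_nonneg hx _)
        _ = ub ^ (1-β) * x ^ β := mul_comm _ _
    have hterm : ∀ (i j : Fin m), |v i.castSucc| ^ β * |v j.castSucc| ≤
        ub ^ (1-β) * (|v i.castSucc * v j.castSucc| ^ β) := by
      intro i j
      rw [abs_mul, Real.mul_rpow (abs_nonneg _) (abs_nonneg _)]
      calc |v i.castSucc| ^ β * |v j.castSucc|
          ≤ |v i.castSucc| ^ β * (ub ^ (1-β) * |v j.castSucc| ^ β) :=
            mul_le_mul_of_nonneg_left (haux _ (abs_nonneg _) (hvub _))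
              (Real.rpow_nonneg (abs_nonneg _) _)
        _ = ub ^ (1-β) * (|v i.castSucc| ^ β * |v j.castSucc| ^ β) := by ring
    have hG2 : |(f S - ∑ i : Fin m, f (v i.castSucc)) * a| ≤
        K2 * ∑ i : Fin m, ∑ j ∈ Finset.Ioi i, |v i.castSucc * v j.castSucc| ^ β * |a| := by
      rw [abs_mul]
      calc |f S - ∑ i : Fin m, f (v i.castSucc)| * |a|
          ≤ (C * ∑ i : Fin m, ∑ j ∈ Finset.Ioi i, |v i.castSucc| ^ β * |v j.castSucc|) * |a| :=
            mul_le_mul_of_nonneg_right hG (abs_nonneg a)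
        _ ≤ (C * ∑ i : Fin m, ∑ j ∈ Finset.Ioi i,
              ub ^ (1-β) * |v i.castSucc * v j.castSucc| ^ β) * |a| := by
            apply mul_le_mul_of_nonneg_right _ (abs_nonneg a)
            apply mul_le_mul_of_nonneg_left _ hC0
            apply Finset.sum_le_sum
            intro i _
            exact Finset.sum_le_sum fun j _ => hterm i j
        _ = K2 * ∑ i : Fin m, ∑ j ∈ Finset.Ioi i, |v i.castSucc * v j.castSucc| ^ β * |a| := by
            rw [hK2]
            simp only [← Finset.mul_sum, ← Finset.sum_mul]
            ring
    -- induction hypothesis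
    have hih : |F (∑ i : Fin m, v i.castSucc) - (∑ i : Fin m, F (v i.castSucc)) -
          ∑ i : Fin m, f (v i.castSucc) * ((∑ j : Fin m, v j.castSucc) - v i.castSucc)| ≤
        (K1 + K2) * ((∑ i : Fin m, ∑ j ∈ Finset.Ioi i, |v i.castSucc * v j.castSucc| ^ (1 + β/2)) +
          ∑ i : Fin m, ∑ j ∈ Finset.Ioi i, ∑ k ∈ Finset.Ioi j,
            |v i.castSucc * v j.castSucc| ^ β * |v k.castSucc|) :=
      ih hm (fun i => v i.castSucc) (fun i => hvub _) hwsum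
    -- sum splits on the right-hand side
    have hpairsplit := pair_split m (fun i j => |v i * v j| ^ (1 + β/2))
    have htriplesplit := triple_split m (fun i j k => |v i * v j| ^ β * |v k|)
    -- nonnegativity
    have hpm : 0 ≤ ∑ i : Fin m, ∑ j ∈ Finset.Ioi i, |v i.castSucc * v j.castSucc| ^ (1 + β/2) :=
      Finset.sum_nonneg fun i _ => Finset.sum_nonneg fun j _ => Real.rpow_nonneg (abs_nonneg _) _
    have htm : 0 ≤ ∑ i : Fin m, ∑ j ∈ Finset.Ioi i, ∑ k ∈ Finset.Ioi j,
        |v i.castSucc * v j.castSucc| ^ β * |v k.castSucc| :=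
      Finset.sum_nonneg fun i _ => Finset.sum_nonneg fun j _ => Finset.sum_nonneg fun k _ =>
        mul_nonneg (Real.rpow_nonneg (abs_nonneg _) _) (abs_nonneg _)
    have hpN : 0 ≤ ∑ i : Fin m, |v i.castSucc * a| ^ (1 + β/2) :=
      Finset.sum_nonneg fun i _ => Real.rpow_nonneg (abs_nonneg _) _
    have htN : 0 ≤ ∑ i : Fin m, ∑ j ∈ Finset.Ioi i, |v i.castSucc * v j.castSucc| ^ β * |a| :=
      Finset.sum_nonneg fun i _ => Finset.sum_nonneg fun j _ =>
        mul_nonneg (Real.rpow_nonneg (abs_nonneg _) _) (abs_nonneg _)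
    have hS2 : ∑ j : Fin m, v j.castSucc = S := rfl
    calc |F (∑ i, v i) - ∑ i, F (v i) - ∑ i, f (v i) * ((∑ j, v j) - v i)|
        = |(F (S + a) - F S - F a - f S * a - f a * S) +
            (f S - ∑ i : Fin m, f (v i.castSucc)) * a +
            (F S - (∑ i : Fin m, F (v i.castSucc)) -
              ∑ i : Fin m, f (v i.castSucc) * (S - v i.castSucc))| := congrArg abs hdecomp
      _ ≤ |F (S + a) - F S - F a - f S * a - f a * S| +
            |(f S - ∑ i : Fin m, f (v i.castSucc)) * a| +
            |F S - (∑ i : Fin m, F (v i.castSucc)) -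
              ∑ i : Fin m, f (v i.castSucc) * (S - v i.castSucc)| :=
          (abs_add_le _ _).trans (add_le_add_left (abs_add_le _ _) _)
      _ ≤ K1 * (∑ i : Fin m, |v i.castSucc * a| ^ (1 + β/2)) +
            K2 * (∑ i : Fin m, ∑ j ∈ Finset.Ioi i, |v i.castSucc * v j.castSucc| ^ β * |a|) +
            (K1 + K2) * ((∑ i : Fin m, ∑ j ∈ Finset.Ioi i,
                |v i.castSucc * v j.castSucc| ^ (1 + β/2)) +
              ∑ i : Fin m, ∑ j ∈ Finset.Ioi i, ∑ k ∈ Finset.Ioi j,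
                |v i.castSucc * v j.castSucc| ^ β * |v k.castSucc|) := by
          refine add_le_add (add_le_add hE2 hG2) ?_
          exact hih
      _ ≤ (K1 + K2) * (((∑ i : Fin m, ∑ j ∈ Finset.Ioi i,
              |v i.castSucc * v j.castSucc| ^ (1 + β/2)) +
            (∑ i : Fin m, |v i.castSucc * a| ^ (1 + β/2))) +
            ((∑ i : Fin m, ∑ j ∈ Finset.Ioi i, ∑ k ∈ Finset.Ioi j,
                |v i.castSucc * v j.castSucc| ^ β * |v k.castSucc|) +
              ∑ i : Fin m, ∑ j ∈ Finset.Ioi i, |v i.castSucc * v j.castSucc| ^ β * |a|)) := by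
          exact combine_ineq _ _ _ _ _ _ hK10 hK20 hpN htN
      _ = (K1 + K2) * ((∑ i, ∑ j ∈ Finset.Ioi i, |v i * v j| ^ (1 + β/2)) +
            ∑ i, ∑ j ∈ Finset.Ioi i, ∑ k ∈ Finset.Ioi j, |v i * v j| ^ β * |v k|) := by
          rw [hpairsplit, htriplesplit, ← ha]


/-- Lemma B.2 of the paper: deviation from additivity of the primitive `F` of `f`. -/
theorem stmt2 (f : ℝ → ℝ) (β : ℝ) (hβ0 : 0 < β) (hβ1 : β ≤ 1)
    (hdiff : Differentiable ℝ f)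
    (hholder : ∀ K : Set ℝ, IsCompact K → ∃ C > 0, ∀ s ∈ K, ∀ t ∈ K,
      |deriv f s - deriv f t| ≤ C * |s - t| ^ β)
    (hf0 : f 0 = 0) (hf'0 : deriv f 0 = 0)
    (F : ℝ → ℝ) (hF : ∀ u : ℝ, F u = ∫ t in (0:ℝ)..u, f t)
    (n : ℕ) (ub : ℝ) (hub : 0 < ub) :
    ∃ b₂ > 0, ∀ u : Fin n → ℝ, (∀ i, u i ∈ Set.Icc (-ub) ub) →
      |F (∑ i, u i) - ∑ i, F (u i) -
          ∑ i : Fin n, ∑ j ∈ Finset.univ.erase i, f (u i) * u j| ≤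
        b₂ * (∑ i : Fin n, ∑ j ∈ Finset.Ioi i, |u i * u j| ^ (1 + β / 2) +
          ∑ i : Fin n, ∑ j ∈ Finset.Ioi i, ∑ k ∈ Finset.Ioi j, |u i * u j| ^ β * |u k|) := by
  have hc : Continuous (deriv f) := deriv_cont f β hβ0 hholder
  set R := (n:ℝ) * ub + ub with hRdef
  obtain ⟨C, hCpos, hH⟩ := hholder (Set.Icc (-R) R) isCompact_Icc
  have hR : ∀ s t : ℝ, |s| ≤ R → |t| ≤ R → |deriv f s - deriv f t| ≤ C * |s - t| ^ β := by
    intro s t hs ht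
    exact hH s (Set.mem_Icc.2 (abs_le.1 hs)) t (Set.mem_Icc.2 (abs_le.1 ht))
  refine ⟨2 * C * ((n:ℝ)+1) ^ (1 + β/2) + C * ub ^ (1-β), ?_, ?_⟩
  · have hA : (0:ℝ) < ((n:ℝ)+1) ^ (1 + β/2) := Real.rpow_pos_of_pos (by positivity) _
    have hB : (0:ℝ) < ub ^ (1-β) := Real.rpow_pos_of_pos hub _
    nlinarith
  · intro u hu
    have hub' : ∀ i, |u i| ≤ ub := fun i => abs_le.2 ⟨(Set.mem_Icc.1 (hu i)).1,
      (Set.mem_Icc.1 (hu i)).2⟩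
    have hsum : ∑ i, |u i| ≤ (n:ℝ) * ub := by
      calc ∑ i, |u i| ≤ ∑ _i : Fin n, ub := Finset.sum_le_sum fun i _ => hub' i
        _ = (n:ℝ) * ub := by
            rw [Finset.sum_const, Finset.card_univ, Fintype.card_fin, nsmul_eq_mul]
    have key := mainind f F β C R ub n hβ0 hβ1 hCpos.le hdiff hc hf0 hf'0 hR hF hub
      (le_of_eq hRdef.symm) n (le_refl n) u hub' hsum
    have hconv : ∑ i : Fin n, ∑ j ∈ Finset.univ.erase i, f (u i) * u j =
        ∑ i, f (u i) * ((∑ j, u j) - u i) := by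
      refine Finset.sum_congr rfl fun i _ => ?_
      rw [← Finset.mul_sum, Finset.sum_erase_eq_sub (Finset.mem_univ i)]
    rw [hconv]
    exact key
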